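/- Let f = (f_0,...,f_{H-1}) with f_H ≡ 0, and suppose for every h ∈ [H] the average Bellman error along π* satisfies |E[f_h(x_h,a_h) − R_h(x_h,a_h) − f_{h+1}(x_{h+1},a_{h+1}) | a_{0:h}∼π*, a_{h+1}∼π_f]| ≤ ε'. Then f_0(x_0, π_f(x_0)) ≥ V*_0(x_0) − H·ε', where V*_0(x_0) = E[∑_{h=0}^{H-1} R_h(x_h,a_h) | π*]. -/
import Mathlib


open Finset

/-- Telescoping lemma: if all the average Bellman errors of `f` along the
optimal policy `π*` are at most `ε'` in absolute value, then the (greedy) value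
of `f` at the initial state is at least `V*_0(x_0) − H·ε'`.  Here `ρ h` is the
state distribution at step `h` induced by the deterministic policy `π*` from
the fixed initial state `x_0`, so that
`V*_0(x_0) = ∑_{h<H} E_{x∼ρ_h}[R_h(x, π*(x))]`. -/
theorem stmt4 {X A : Type*} [Fintype X] [Fintype A] [DecidableEq X]
    (H : ℕ) (x0 : X)
    (P : ℕ → X → A → X → ℝ) (hPnn : ∀ h x a x', 0 ≤ P h x a x')
    (hP1 : ∀ h x a, ∑ x', P h x a x' = 1)
    (R : ℕ → X → A → ℝ)
    (f : ℕ → X → A → ℝ) (hfH : ∀ x a, f H x a = 0)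
    (πf πstar : ℕ → X → A)
    (hgreedy : ∀ h x a, f h x a ≤ f h x (πf h x))
    (ρ : ℕ → X → ℝ)
    (hρ0 : ∀ x, ρ 0 x = if x = x0 then 1 else 0)
    (hρ : ∀ h x', ρ (h + 1) x' = ∑ x, ρ h x * P h x (πstar h x) x')
    (ε' : ℝ)
    (hbell : ∀ h ∈ range H,
      |∑ x, ρ h x * (f h x (πstar h x) - R h x (πstar h x)
        - ∑ x', P h x (πstar h x) x' * f (h + 1) x' (πf (h + 1) x'))| ≤ ε') :
    (∑ h ∈ range H, ∑ x, ρ h x * R h x (πstar h x)) - H * ε'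
      ≤ f 0 x0 (πf 0 x0) := by
  -- nonnegativity of ρ
  have hρnn : ∀ h x, 0 ≤ ρ h x := by
    intro h
    induction h with
    | zero => intro x; rw [hρ0]; positivity
    | succ h ih =>
      intro x'
      rw [hρ]
      exact Finset.sum_nonneg fun x _ => mul_nonneg (ih x) (hPnn _ _ _ _)
  set D : ℕ → ℝ := fun h => ∑ x, ρ h x * f h x (πf h x) with hD
  have hD0 : D 0 = f 0 x0 (πf 0 x0) := by
    simp only [hD]
    rw [Finset.sum_eq_single x0]
    · rw [hρ0]; simp
    · intro b _ hb; rw [hρ0]; simp [hb]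
    · simp
  have hDH : D H = 0 := by simp [hD, hfH]
  -- C_h = D (h+1)
  have hC : ∀ h, (∑ x, ρ h x * ∑ x', P h x (πstar h x) x' * f (h + 1) x' (πf (h + 1) x'))
      = D (h + 1) := by
    intro h
    simp only [hD, Finset.mul_sum]
    rw [Finset.sum_comm]
    refine Finset.sum_congr rfl fun x' _ => ?_
    rw [hρ, Finset.sum_mul]
    exact Finset.sum_congr rfl fun x _ => by ring
  -- per-step bound
  have hstep : ∀ h ∈ range H,
      (∑ x, ρ h x * R h x (πstar h x)) ≤ D h - D (h + 1) + ε' := by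
    intro h hh
    have hb := hbell h hh
    have hE : (∑ x, ρ h x * (f h x (πstar h x) - R h x (πstar h x)
        - ∑ x', P h x (πstar h x) x' * f (h + 1) x' (πf (h + 1) x')))
        = (∑ x, ρ h x * f h x (πstar h x)) - (∑ x, ρ h x * R h x (πstar h x))
          - D (h + 1) := by
      rw [← hC h, ← Finset.sum_sub_distrib, ← Finset.sum_sub_distrib]
      exact Finset.sum_congr rfl fun x _ => by ring
    have hAD : (∑ x, ρ h x * f h x (πstar h x)) ≤ D h :=
      Finset.sum_le_sum fun x _ =>
        mul_le_mul_of_nonneg_left (hgreedy h x _) (hρnn h x)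
    have := (abs_le.mp hb).1
    rw [hE] at this
    linarith
  calc (∑ h ∈ range H, ∑ x, ρ h x * R h x (πstar h x)) - H * ε'
      ≤ (∑ h ∈ range H, (D h - D (h + 1) + ε')) - H * ε' := by
        have := Finset.sum_le_sum hstep
        linarith
    _ = f 0 x0 (πf 0 x0) := by
        rw [Finset.sum_add_distrib, Finset.sum_range_sub' D, Finset.sum_const,
          Finset.card_range, hD0, hDH, nsmul_eq_mul]
        ring
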